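/- Let A = k[p,q], θ₁ := ∂/∂p and θ₂ := q·∂/∂p. Then θ₁ and θ₂ are commuting derivations of A, and the formal deformation of A given by the UDF exp[t(p₁⊗p₂ − p₂⊗p₁)] (with p_i acting by θ_i) is trivial, i.e., equivalent over k[[t]] to the undeformed commutative product. -/

import Mathlib

open TensorProduct Coalgebra

section Prelude

variable (R : Type*) [CommRing R]
variable (B : Type*) [Ring B] [Bialgebra R B]
variable (A : Type*) [Ring A] [Algebra R A]

/-- The action of `B ⊗ B` on `A ⊗ A` induced by a representation `ρ : B → End A`. -/
noncomputable def act2 (ρ : B →ₐ[R] Module.End R A) :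
    B ⊗[R] B →ₗ[R] (A ⊗[R] A) →ₗ[R] A ⊗[R] A :=
  TensorProduct.homTensorHomMap (RingHom.id R) A A A A ∘ₗ TensorProduct.map ρ.toLinearMap ρ.toLinearMap

/-- `A` is a left `B`-module algebra via `ρ`: the multiplication of `A` is `B`-linear
(with respect to the diagonal action on `A ⊗ A`), and `b • 1 = ε(b) • 1`. -/
def IsModuleAlgebra (ρ : B →ₐ[R] Module.End R A) : Prop :=
  (∀ b : B, (ρ b) ∘ₗ LinearMap.mul' R A =
      LinearMap.mul' R A ∘ₗ act2 R B A ρ (Coalgebra.comul b)) ∧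
  (∀ b : B, ρ b 1 = Coalgebra.counit (R := R) b • (1 : A))

/-- `F ∈ B ⊗ B` is a twisting element: `[(Δ⊗id)F](F⊗1) = [(id⊗Δ)F](1⊗F)` and
`(ε⊗id)F = 1 = (id⊗ε)F`. -/
def IsTwisting (F : B ⊗[R] B) : Prop :=
  (TensorProduct.map Coalgebra.comul LinearMap.id F) * (F ⊗ₜ[R] (1 : B)) =
    (TensorProduct.assoc R B B B).symm
      ((TensorProduct.map LinearMap.id Coalgebra.comul F) * ((1 : B) ⊗ₜ[R] F)) ∧
  TensorProduct.lid R B (TensorProduct.map Coalgebra.counit LinearMap.id F) = 1 ∧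
  TensorProduct.rid R B (TensorProduct.map LinearMap.id Coalgebra.counit F) = 1

/-- The multiplication twisted by `F`: `a * b := μ_A (F (a ⊗ b))`. -/
noncomputable def twMul (ρ : B →ₐ[R] Module.End R A) (F : B ⊗[R] B) (a b : A) : A :=
  LinearMap.mul' R A (act2 R B A ρ F (a ⊗ₜ[R] b))

end Prelude

open TensorProduct Coalgebra

namespace PrimitivePolyBialgebra

variable (k : Type*) [CommRing k] (σ : Type*)

/-- The comultiplication of `k[xᵢ : i ∈ σ]` determined by declaring every `xᵢ` primitive. -/
noncomputable def comulAlg :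
    MvPolynomial σ k →ₐ[k] MvPolynomial σ k ⊗[k] MvPolynomial σ k :=
  MvPolynomial.aeval (fun i => MvPolynomial.X i ⊗ₜ[k] 1 + 1 ⊗ₜ[k] MvPolynomial.X i)

/-- The counit of `k[xᵢ : i ∈ σ]`, sending every `xᵢ` to `0`. -/
noncomputable def counitAlg : MvPolynomial σ k →ₐ[k] k :=
  MvPolynomial.aeval 0

noncomputable instance : Coalgebra k (MvPolynomial σ k) where
  comul := (comulAlg k σ).toLinearMap
  counit := (counitAlg k σ).toLinearMap
  coassoc := by
    have h : ((Algebra.TensorProduct.assoc k k k (MvPolynomial σ k) (MvPolynomial σ k)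
          (MvPolynomial σ k)).toAlgHom.comp
        ((Algebra.TensorProduct.map (comulAlg k σ) (AlgHom.id k _)).comp (comulAlg k σ))) =
        ((Algebra.TensorProduct.map (AlgHom.id k _) (comulAlg k σ)).comp (comulAlg k σ)) := by
      apply MvPolynomial.algHom_ext
      intro i
      simp [comulAlg, tmul_add, add_tmul, Algebra.TensorProduct.one_def, add_assoc]
    exact LinearMap.ext fun p => congrArg (fun f => f p) (congrArg AlgHom.toLinearMap h)
  rTensor_counit_comp_comul := by
    have h : ((Algebra.TensorProduct.map (counitAlg k σ) (AlgHom.id k _)).comp (comulAlg k σ)) =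
        (Algebra.TensorProduct.includeRight :
          MvPolynomial σ k →ₐ[k] k ⊗[k] MvPolynomial σ k) := by
      apply MvPolynomial.algHom_ext
      intro i
      simp [comulAlg, counitAlg, tmul_add, add_tmul]
    exact LinearMap.ext fun p => congrArg (fun f => f p) (congrArg AlgHom.toLinearMap h)
  lTensor_counit_comp_comul := by
    have h : ((Algebra.TensorProduct.map (AlgHom.id k _) (counitAlg k σ)).comp (comulAlg k σ)) =
        (Algebra.TensorProduct.includeLeft :
          MvPolynomial σ k →ₐ[k] MvPolynomial σ k ⊗[k] k) := by
      apply MvPolynomial.algHom_ext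
      intro i
      simp [comulAlg, counitAlg, tmul_add, add_tmul]
    exact LinearMap.ext fun p => congrArg (fun f => f p) (congrArg AlgHom.toLinearMap h)

noncomputable instance : Bialgebra k (MvPolynomial σ k) :=
  Bialgebra.mk' k (MvPolynomial σ k) (map_one (counitAlg k σ))
    (fun {a b} => map_mul (counitAlg k σ) a b)
    (map_one (comulAlg k σ)) (fun {a b} => map_mul (comulAlg k σ) a b)

end PrimitivePolyBialgebra

section FormalUDF

variable (k : Type*) [CommRing k]
variable (B : Type*) [Ring B] [Bialgebra k B]
variable (A : Type*) [Ring A] [Algebra k A]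

/-- A family of coefficients `(Fₙ)ₙ` (representing `F = Σ tⁿ Fₙ ∈ (B⊗B)[[t]]`) is a
universal deformation formula over `k[[t]]` based on `B`: `F₀ = 1⊗1`, and the twisting
element conditions hold `t`-coefficientwise. -/
def IsFormalUDF (Fc : ℕ → B ⊗[k] B) : Prop :=
  Fc 0 = 1 ∧
  (∀ n : ℕ,
    ∑ ij ∈ Finset.HasAntidiagonal.antidiagonal n,
      (TensorProduct.map Coalgebra.comul LinearMap.id (Fc ij.1)) * (Fc ij.2 ⊗ₜ[k] (1 : B)) =
    ∑ ij ∈ Finset.HasAntidiagonal.antidiagonal n,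
      (TensorProduct.assoc k B B B).symm
        ((TensorProduct.map LinearMap.id Coalgebra.comul (Fc ij.1)) *
          ((1 : B) ⊗ₜ[k] Fc ij.2))) ∧
  (∀ n : ℕ, TensorProduct.lid k B (TensorProduct.map Coalgebra.counit LinearMap.id (Fc n)) =
      if n = 0 then 1 else 0) ∧
  (∀ n : ℕ, TensorProduct.rid k B (TensorProduct.map LinearMap.id Coalgebra.counit (Fc n)) =
      if n = 0 then 1 else 0)

/-- The star product on `A[[t]]` determined by the formal twisting family `(Fₙ)ₙ`:
`f * g := Σₙ tⁿ Σ_{i+j+l=n} μ(F_l(fᵢ ⊗ gⱼ))`. -/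
noncomputable def starPS (ρ : B →ₐ[k] Module.End k A) (Fc : ℕ → B ⊗[k] B)
    (x y : PowerSeries A) : PowerSeries A :=
  PowerSeries.mk fun n =>
    ∑ lm ∈ Finset.HasAntidiagonal.antidiagonal n, ∑ ij ∈ Finset.HasAntidiagonal.antidiagonal lm.2,
      LinearMap.mul' k A (act2 k B A ρ (Fc lm.1)
        ((PowerSeries.coeff ij.1 x) ⊗ₜ[k] (PowerSeries.coeff ij.2 y)))

end FormalUDF


section Act2Lemmas

variable {R : Type*} [CommRing R]
variable {B : Type*} [Ring B] [Bialgebra R B]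
variable {A : Type*} [Ring A] [Algebra R A]

lemma act2_tmul (ρ : B →ₐ[R] Module.End R A) (a b : B) :
    act2 R B A ρ (a ⊗ₜ[R] b) = TensorProduct.map (ρ a) (ρ b) := by
  simp [act2]

lemma act2_one (ρ : B →ₐ[R] Module.End R A) :
    act2 R B A ρ 1 = LinearMap.id := by
  rw [Algebra.TensorProduct.one_def, act2_tmul]
  simp [Module.End.one_eq_id, TensorProduct.map_id]

lemma act2_mul (ρ : B →ₐ[R] Module.End R A) (u v : B ⊗[R] B) :
    act2 R B A ρ (u * v) = act2 R B A ρ u ∘ₗ act2 R B A ρ v := by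
  induction u using TensorProduct.induction_on with
  | zero => simp
  | add u w hu hw => simp [add_mul, hu, hw, LinearMap.add_comp]
  | tmul a b =>
    induction v using TensorProduct.induction_on with
    | zero => simp
    | add v w hv hw => simp [mul_add, hv, hw, LinearMap.comp_add]
    | tmul c d =>
      rw [Algebra.TensorProduct.tmul_mul_tmul, act2_tmul, act2_tmul, act2_tmul,
        map_mul, map_mul]
      exact TensorProduct.map_comp _ _ _ _

end Act2Lemmas


open MvPolynomial in
/-- The coefficient family of `exp[t(p₁⊗p₂ − p₂⊗p₁)] ∈ (k[p₁,p₂] ⊗ k[p₁,p₂])[[t]]`. -/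
noncomputable def expF (k : Type) [Field k] :
    ℕ → MvPolynomial (Fin 2) k ⊗[k] MvPolynomial (Fin 2) k := fun n =>
  ((n.factorial : k))⁻¹ • ((X 0 ⊗ₜ[k] X 1 - X 1 ⊗ₜ[k] X 0) ^ n)

open MvPolynomial in
/-- On `A = k[p,q]` the derivations `θ₁ = ∂/∂p` and `θ₂ = q·∂/∂p`
commute, and the formal deformation of `A` given by the UDF `exp[t(p₁⊗p₂ − p₂⊗p₁)]`,
with `pᵢ` acting by `θᵢ`, is trivial: it is equivalent over `k[[t]]`, via an equivalence
`id + tφ₁ + t²φ₂ + ⋯`, to the undeformed commutative product.  (Here `p = X 0`,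
`q = X 1`.) -/
theorem trivial_deformation_example
    (k : Type) [Field k] [CharZero k]
    (θ₁ θ₂ : Module.End k (MvPolynomial (Fin 2) k))
    (hθ₁ : θ₁ = (pderiv (R := k) (0 : Fin 2)).toLinearMap)
    (hθ₂ : θ₂ = (LinearMap.mulLeft k (X 1 : MvPolynomial (Fin 2) k)) ∘ₗ
      (pderiv (R := k) (0 : Fin 2)).toLinearMap) :
    Commute θ₁ θ₂ ∧
    ∀ ρ : MvPolynomial (Fin 2) k →ₐ[k] Module.End k (MvPolynomial (Fin 2) k),
      IsModuleAlgebra k (MvPolynomial (Fin 2) k) (MvPolynomial (Fin 2) k) ρ →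
      ρ (X 0) = θ₁ → ρ (X 1) = θ₂ →
      ∃ φ : ℕ → (MvPolynomial (Fin 2) k →ₗ[k] MvPolynomial (Fin 2) k),
        φ 0 = LinearMap.id ∧
        (∀ x y : PowerSeries (MvPolynomial (Fin 2) k),
          (PowerSeries.mk fun n => ∑ ij ∈ Finset.HasAntidiagonal.antidiagonal n,
              φ ij.1 (PowerSeries.coeff ij.2
                (starPS k (MvPolynomial (Fin 2) k) (MvPolynomial (Fin 2) k) ρ (expF k) x y))) =
            (PowerSeries.mk fun n => ∑ ij ∈ Finset.HasAntidiagonal.antidiagonal n,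
              φ ij.1 (PowerSeries.coeff ij.2 x)) *
            (PowerSeries.mk fun n => ∑ ij ∈ Finset.HasAntidiagonal.antidiagonal n,
              φ ij.1 (PowerSeries.coeff ij.2 y))) ∧
        Function.Bijective (fun x : PowerSeries (MvPolynomial (Fin 2) k) =>
          PowerSeries.mk fun n => ∑ ij ∈ Finset.HasAntidiagonal.antidiagonal n,
            φ ij.1 (PowerSeries.coeff ij.2 x)) := by
  constructor
  · -- the derivations commute
    rw [hθ₁, hθ₂]
    refine LinearMap.ext fun f => ?_
    simp only [Module.End.mul_apply, LinearMap.comp_apply, LinearMap.mulLeft_apply,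
      Derivation.coeFn_coe]
    have h1 : (pderiv (R := k) (0 : Fin 2)) (X 1 * (pderiv (R := k) (0 : Fin 2)) f) =
        X 1 * (pderiv (R := k) (0 : Fin 2)) ((pderiv (R := k) (0 : Fin 2)) f) := by
      rw [pderiv_mul]
      simp [pderiv_X]
    exact h1
  · intro ρ _ hρ1 hρ2
    -- μ ∘ act2(X0⊗X1 - X1⊗X0) = 0
    have key0 : ∀ v : MvPolynomial (Fin 2) k ⊗[k] MvPolynomial (Fin 2) k,
        LinearMap.mul' k (MvPolynomial (Fin 2) k)
          (act2 k (MvPolynomial (Fin 2) k) (MvPolynomial (Fin 2) k) ρ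
            (X 0 ⊗ₜ[k] X 1 - X 1 ⊗ₜ[k] X 0) v) = 0 := by
      intro v
      rw [map_sub, act2_tmul, act2_tmul, LinearMap.sub_apply]
      induction v using TensorProduct.induction_on with
      | zero => simp
      | add v w hv hw =>
          rw [map_add, map_add, add_sub_add_comm, map_add, hv, hw, add_zero]
      | tmul a b =>
          rw [TensorProduct.map_tmul, TensorProduct.map_tmul, map_sub,
            LinearMap.mul'_apply, LinearMap.mul'_apply, hρ1, hρ2, hθ₁, hθ₂]
          simp only [LinearMap.comp_apply, LinearMap.mulLeft_apply, Derivation.coeFn_coe]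
          ring
    have keyn : ∀ m : ℕ, ∀ u : MvPolynomial (Fin 2) k ⊗[k] MvPolynomial (Fin 2) k,
        LinearMap.mul' k (MvPolynomial (Fin 2) k)
          (act2 k (MvPolynomial (Fin 2) k) (MvPolynomial (Fin 2) k) ρ
            (expF k (m + 1)) u) = 0 := by
      intro m u
      rw [expF, map_smul, pow_succ', act2_mul]
      simp only [LinearMap.smul_apply, LinearMap.comp_apply]
      rw [map_smul, key0, smul_zero]
    -- the star product is the ordinary Cauchy product
    have hstar : ∀ x y : PowerSeries (MvPolynomial (Fin 2) k),
        starPS k (MvPolynomial (Fin 2) k) (MvPolynomial (Fin 2) k) ρ (expF k) x y = x * y := by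
      intro x y
      refine PowerSeries.ext fun n => ?_
      rw [starPS, PowerSeries.coeff_mk, PowerSeries.coeff_mul]
      rw [Finset.sum_eq_single_of_mem ((0 : ℕ), n)
        (Finset.HasAntidiagonal.mem_antidiagonal.mpr (zero_add n))]
      · refine Finset.sum_congr rfl fun ij _ => ?_
        have h0 : expF k 0 = 1 := by simp [expF]
        rw [h0, act2_one, LinearMap.id_apply, LinearMap.mul'_apply]
      · intro b hb hne
        have hb1 : b.1 ≠ 0 := by
          intro h0
          exact hne (Prod.ext h0 (by have := Finset.HasAntidiagonal.mem_antidiagonal.mp hb; omega))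
        obtain ⟨m, hm⟩ := Nat.exists_eq_succ_of_ne_zero hb1
        refine Finset.sum_eq_zero fun ij _ => ?_
        rw [hm]
        exact keyn m _
    -- the equivalence is the identity: φ₀ = id, φₙ = 0 for n ≥ 1
    refine ⟨fun n => if n = 0 then LinearMap.id else 0, if_pos rfl, ?_, ?_⟩
    · intro x y
      have hid : ∀ z : PowerSeries (MvPolynomial (Fin 2) k),
          (PowerSeries.mk fun n => ∑ ij ∈ Finset.HasAntidiagonal.antidiagonal n,
            (fun n => if n = 0 then (LinearMap.id : MvPolynomial (Fin 2) k →ₗ[k]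
              MvPolynomial (Fin 2) k) else 0) ij.1 (PowerSeries.coeff ij.2 z)) = z := by
        intro z
        refine PowerSeries.ext fun n => ?_
        rw [PowerSeries.coeff_mk]
        rw [Finset.sum_eq_single_of_mem ((0 : ℕ), n)
          (Finset.HasAntidiagonal.mem_antidiagonal.mpr (zero_add n))]
        · simp
        · intro b hb hne
          have hb1 : b.1 ≠ 0 := by
            intro h0
            exact hne (Prod.ext h0 (by have := Finset.HasAntidiagonal.mem_antidiagonal.mp hb; omega))
          simp [if_neg hb1]
      rw [hid, hid, hid, hstar]
    · have hid : ∀ z : PowerSeries (MvPolynomial (Fin 2) k),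
          (PowerSeries.mk fun n => ∑ ij ∈ Finset.HasAntidiagonal.antidiagonal n,
            (fun n => if n = 0 then (LinearMap.id : MvPolynomial (Fin 2) k →ₗ[k]
              MvPolynomial (Fin 2) k) else 0) ij.1 (PowerSeries.coeff ij.2 z)) = z := by
        intro z
        refine PowerSeries.ext fun n => ?_
        rw [PowerSeries.coeff_mk]
        rw [Finset.sum_eq_single_of_mem ((0 : ℕ), n)
          (Finset.HasAntidiagonal.mem_antidiagonal.mpr (zero_add n))]
        · simp
        · intro b hb hne
          have hb1 : b.1 ≠ 0 := by
            intro h0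
            exact hne (Prod.ext h0 (by have := Finset.HasAntidiagonal.mem_antidiagonal.mp hb; omega))
          simp [if_neg hb1]
      have : (fun x : PowerSeries (MvPolynomial (Fin 2) k) =>
          PowerSeries.mk fun n => ∑ ij ∈ Finset.HasAntidiagonal.antidiagonal n,
            (fun n => if n = 0 then (LinearMap.id : MvPolynomial (Fin 2) k →ₗ[k]
              MvPolynomial (Fin 2) k) else 0) ij.1 (PowerSeries.coeff ij.2 x)) = id :=
        funext hid
      rw [this]
      exact Function.bijective_id
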